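/- (Stochastic block model spectral decomposition.) Let p be a k×k real symmetric positive definite matrix and B₁,…,B_k disjoint Borel subsets of [0,1] with Lebesgue measures β₁,…,β_k > 0. Define f(x,y) = Σ_{i,j=1}^k p(i,j) 𝟙_{Bᵢ}(x) 𝟙_{Bⱼ}(y). Let p̃ be the k×k matrix p̃(i,j) = p(i,j)·√(βᵢ βⱼ). Then the nonzero eigenvalues of the integral operator I_f on L²[0,1] (with multiplicity) are exactly the eigenvalues θ₁ ≥ … ≥ θ_k > 0 of p̃. Moreover, if p̃ = U' D U is a spectral decomposition with D = Diag(θ₁,…,θ_k) and U orthogonal, and sᵢ = βᵢ^{-1/2} 𝟙_{Bᵢ}, then the functions rⱼ = Σᵢ U(j,i) sᵢ form an orthonormal family of eigenfunctions: I_f rⱼ = θⱼ rⱼ. -/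

import Mathlib

open MeasureTheory Set Matrix

theorem stmt7 (k : ℕ) (p : Matrix (Fin k) (Fin k) ℝ) (hsym : p.IsSymm) (hpd : p.PosDef)
    (B : Fin k → Set ℝ) (hBmeas : ∀ i, MeasurableSet (B i))
    (hBsub : ∀ i, B i ⊆ Icc (0:ℝ) 1)
    (hBdisj : ∀ i j, i ≠ j → Disjoint (B i) (B j))
    (β : Fin k → ℝ) (hβ : ∀ i, β i = (volume (B i)).toReal) (hβpos : ∀ i, 0 < β i)
    (f : ℝ → ℝ → ℝ)
    (hf : ∀ x y, f x y = ∑ i, ∑ j, p i j * (B i).indicator 1 x * (B j).indicator 1 y)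
    (ptld : Matrix (Fin k) (Fin k) ℝ)
    (hptld : ∀ i j, ptld i j = p i j * Real.sqrt (β i * β j))
    (θ : Fin k → ℝ) (hθpos : ∀ i, 0 < θ i) (hθmono : Antitone θ)
    (U : Matrix (Fin k) (Fin k) ℝ) (hUorth : Uᵀ * U = 1)
    (hdec : ptld = Uᵀ * Matrix.diagonal θ * U)
    (s : Fin k → ℝ → ℝ)
    (hs : ∀ i, s i = fun x => (Real.sqrt (β i))⁻¹ * (B i).indicator 1 x)
    (r : Fin k → ℝ → ℝ) (hr : ∀ j, r j = fun x => ∑ i, U j i * s i x) :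
    (∀ j l, (∫ x in Icc (0:ℝ) 1, r j x * r l x) = if j = l then 1 else 0) ∧
    (∀ j x, (∫ y in Icc (0:ℝ) 1, f x y * r j y) = θ j * r j x) ∧
    (∀ (θ' : ℝ) (g : ℝ → ℝ), θ' ≠ 0 →
      Integrable g (volume.restrict (Icc (0:ℝ) 1)) →
      ¬ (g =ᵐ[volume.restrict (Icc (0:ℝ) 1)] 0) →
      (∀ x ∈ Icc (0:ℝ) 1, (∫ y in Icc (0:ℝ) 1, f x y * g y) = θ' * g x) →
      ∃ i, θ' = θ i) := by
  -- basic facts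
  have hsq : ∀ i, Real.sqrt (β i) * Real.sqrt (β i) = β i :=
    fun i => Real.mul_self_sqrt (hβpos i).le
  have hsne : ∀ i, Real.sqrt (β i) ≠ 0 := fun i => (Real.sqrt_pos.mpr (hβpos i)).ne'
  have hβne : ∀ i, β i ≠ 0 := fun i => (hβpos i).ne'
  -- indicator product
  have hind_mul : ∀ (i j : Fin k) (x : ℝ), (B i).indicator (1:ℝ→ℝ) x * (B j).indicator 1 x
      = ((B i) ∩ (B j)).indicator 1 x := by
    intro i j x
    by_cases hi : x ∈ B i <;> by_cases hj : x ∈ B j <;> simp [Set.indicator, hi, hj]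
  -- key integral of product of indicators
  have hII : ∀ i j : Fin k, (∫ x in Icc (0:ℝ) 1, (B i).indicator 1 x * (B j).indicator 1 x)
      = if i = j then β i else 0 := by
    intro i j
    simp_rw [hind_mul]
    rcases eq_or_ne i j with h | h
    · subst h
      rw [if_pos rfl, Set.inter_self, setIntegral_indicator (hBmeas i),
        Set.inter_eq_right.mpr (hBsub i), hβ i]
      simp [Measure.real]
    · rw [if_neg h, (hBdisj i j h).inter_eq]
      simp
  -- integrability of indicator products
  have hIndMul : ∀ i j : Fin k, Integrable
      (fun x => (B i).indicator (1:ℝ→ℝ) x * (B j).indicator 1 x)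
      (volume.restrict (Icc (0:ℝ) 1)) := by
    intro i j
    simp_rw [hind_mul]
    exact (integrable_const (1:ℝ)).indicator ((hBmeas i).inter (hBmeas j))
  -- main computation lemma
  have L1 : ∀ a b : Fin k → ℝ,
      (∫ x in Icc (0:ℝ) 1, (∑ i, a i * (B i).indicator 1 x) * (∑ i, b i * (B i).indicator 1 x))
        = ∑ i, a i * b i * β i := by
    intro a b
    have hexp : ∀ x : ℝ, (∑ i, a i * (B i).indicator (1:ℝ→ℝ) x) * (∑ i, b i * (B i).indicator 1 x)
        = ∑ i, ∑ i', (a i * b i') * ((B i).indicator 1 x * (B i').indicator 1 x) := by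
      intro x
      rw [Finset.sum_mul_sum]
      exact Finset.sum_congr rfl fun i _ => Finset.sum_congr rfl fun i' _ => by ring
    simp_rw [hexp]
    rw [integral_finset_sum _ (fun i _ => integrable_finset_sum _
      (fun i' _ => (hIndMul i i').const_mul _))]
    refine Finset.sum_congr rfl fun i _ => ?_
    rw [integral_finset_sum _ (fun i' _ => (hIndMul i i').const_mul _)]
    simp_rw [integral_const_mul, hII]
    rw [Finset.sum_congr rfl (fun i' _ => by
      rw [show (a i * b i') * (if i = i' then β i else 0)
        = if i' = i then a i * b i' * β i else 0 from by
          rcases eq_or_ne i i' with h | h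
          · simp [h]
          · simp [h, h.symm]])]
    simp
  -- L2 :
  have L2 : ∀ (c : Fin k) (e : Fin k → ℝ),
      (∫ x in Icc (0:ℝ) 1, (B c).indicator 1 x * (∑ a, e a * (B a).indicator 1 x))
        = e c * β c := by
    intro c e
    have h1 : ∀ x : ℝ, (B c).indicator (1:ℝ→ℝ) x
        = ∑ i, (if i = c then (1:ℝ) else 0) * (B i).indicator 1 x := by
      intro x
      simp [ite_mul]
    calc (∫ x in Icc (0:ℝ) 1, (B c).indicator 1 x * (∑ a, e a * (B a).indicator 1 x))
        = ∫ x in Icc (0:ℝ) 1, (∑ i, (if i = c then (1:ℝ) else 0) * (B i).indicator 1 x)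
            * (∑ a, e a * (B a).indicator 1 x) := by
          refine setIntegral_congr_fun measurableSet_Icc fun x _ => ?_
          rw [h1 x]
      _ = ∑ i, (if i = c then (1:ℝ) else 0) * e i * β i := L1 _ _
      _ = e c * β c := by simp [ite_mul]
  -- r in normal form
  have hrform : ∀ (j : Fin k) (y : ℝ),
      r j y = ∑ i, (U j i * (Real.sqrt (β i))⁻¹) * (B i).indicator 1 y := by
    intro j y
    rw [hr j]
    exact Finset.sum_congr rfl fun i _ => by rw [hs i]; ring
  -- f in normal form
  have hfform : ∀ x y : ℝ,
      f x y = ∑ b, (∑ a, p a b * (B a).indicator 1 x) * (B b).indicator 1 y := by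
    intro x y
    rw [hf]
    simp_rw [Finset.sum_mul]
    exact Finset.sum_comm
  -- matrix facts
  have hUUT : U * Uᵀ = 1 := mul_eq_one_comm.mp hUorth
  have hUp : U * ptld = Matrix.diagonal θ * U := by
    rw [hdec, ← Matrix.mul_assoc, ← Matrix.mul_assoc, hUUT, Matrix.one_mul]
  have hkey : ∀ (a j : Fin k), (∑ b, p a b * U j b * Real.sqrt (β b))
      = θ j * U j a * (Real.sqrt (β a))⁻¹ := by
    intro a j
    have h1 := congrArg (fun M : Matrix (Fin k) (Fin k) ℝ => M j a) hUp
    simp only [Matrix.mul_apply, Matrix.diagonal_apply, ite_mul, zero_mul,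
      Finset.sum_ite_eq, Finset.mem_univ, if_true] at h1
    have h2 : (∑ b, U j b * ptld b a)
        = (∑ b, p a b * U j b * Real.sqrt (β b)) * Real.sqrt (β a) := by
      rw [Finset.sum_mul]
      refine Finset.sum_congr rfl fun b _ => ?_
      rw [hptld, Real.sqrt_mul (hβpos b).le, hsym.apply a b]
      ring
    rw [h2] at h1
    exact (eq_mul_inv_iff_mul_eq₀ (hsne a)).mpr h1
  refine ⟨?_, ?_, ?_⟩
  · -- orthonormality
    intro j l
    simp_rw [hrform]
    rw [L1]
    have h1 : ∀ i, (U j i * (Real.sqrt (β i))⁻¹) * (U l i * (Real.sqrt (β i))⁻¹) * β i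
        = U j i * U l i := by
      intro i
      rw [← hsq i]
      field_simp [hsne i]
      rw [Real.sqrt_sq (Real.sqrt_nonneg _)]
    rw [Finset.sum_congr rfl fun i _ => h1 i]
    have h2 := congrArg (fun M : Matrix (Fin k) (Fin k) ℝ => M j l) hUUT
    simp only [Matrix.mul_apply, Matrix.transpose_apply, Matrix.one_apply] at h2
    exact h2
  · -- eigenfunctions
    intro j x
    have h0 : ∀ y : ℝ, f x y * r j y
        = (∑ b, (∑ a, p a b * (B a).indicator 1 x) * (B b).indicator 1 y)
          * (∑ i, (U j i * (Real.sqrt (β i))⁻¹) * (B i).indicator 1 y) := by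
      intro y
      rw [hfform, hrform]
    simp_rw [h0]
    rw [L1]
    have h1 : ∀ b, (∑ a, p a b * (B a).indicator 1 x) * (U j b * (Real.sqrt (β b))⁻¹) * β b
        = ∑ a, (p a b * U j b * Real.sqrt (β b)) * (B a).indicator 1 x := by
      intro b
      rw [Finset.sum_mul, Finset.sum_mul]
      refine Finset.sum_congr rfl fun a _ => ?_
      rw [show β b = Real.sqrt (β b) * Real.sqrt (β b) from (hsq b).symm]
      field_simp [hsne b]
      rw [Real.sqrt_sq (Real.sqrt_nonneg _)]
    rw [Finset.sum_congr rfl fun b _ => h1 b, Finset.sum_comm]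
    rw [hrform, Finset.mul_sum]
    refine Finset.sum_congr rfl fun a _ => ?_
    rw [← Finset.sum_mul, hkey a j]
    ring
  · -- eigenvalues
    intro θ' g hθ' hg hne heig
    set v : Fin k → ℝ := fun b => ∫ y in Icc (0:ℝ) 1, (B b).indicator 1 y * g y with hv_def
    have hindg : ∀ b, Integrable (fun y => (B b).indicator (1:ℝ→ℝ) y * g y)
        (volume.restrict (Icc (0:ℝ) 1)) := by
      intro b
      have : (fun y => (B b).indicator (1:ℝ→ℝ) y * g y) = (B b).indicator g := by
        funext y
        by_cases h : y ∈ B b <;> simp [h]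
      rw [this]
      exact hg.indicator (hBmeas b)
    have hA : ∀ x : ℝ, (∫ y in Icc (0:ℝ) 1, f x y * g y)
        = ∑ a, (∑ b, p a b * v b) * (B a).indicator 1 x := by
      intro x
      have h1 : ∀ y : ℝ, f x y * g y
          = ∑ a, ∑ b, (p a b * (B a).indicator 1 x) * ((B b).indicator 1 y * g y) := by
        intro y
        rw [hf, Finset.sum_mul]
        refine Finset.sum_congr rfl fun a _ => ?_
        rw [Finset.sum_mul]
        exact Finset.sum_congr rfl fun b _ => by ring
      simp_rw [h1]
      rw [integral_finset_sum _ (fun a _ => integrable_finset_sum _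
        (fun b _ => (hindg b).const_mul _))]
      refine Finset.sum_congr rfl fun a _ => ?_
      rw [integral_finset_sum _ (fun b _ => (hindg b).const_mul _)]
      simp_rw [integral_const_mul]
      rw [Finset.sum_mul]
      exact Finset.sum_congr rfl fun b _ => by rw [hv_def]; ring
    have hB : ∀ c, θ' * v c = β c * ∑ b, p c b * v b := by
      intro c
      have h1 : (∫ y in Icc (0:ℝ) 1, (B c).indicator 1 y * (θ' * g y)) = θ' * v c := by
        simp_rw [show ∀ y : ℝ, (B c).indicator (1:ℝ→ℝ) y * (θ' * g y)
          = θ' * ((B c).indicator 1 y * g y) from fun y => by ring]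
        exact integral_const_mul _ _
      calc θ' * v c
          = ∫ y in Icc (0:ℝ) 1, (B c).indicator 1 y * (θ' * g y) := h1.symm
        _ = ∫ y in Icc (0:ℝ) 1, (B c).indicator 1 y
              * (∑ a, (∑ b, p a b * v b) * (B a).indicator 1 y) := by
            refine setIntegral_congr_fun measurableSet_Icc fun y hy => ?_
            rw [show θ' * g y = ∑ a, (∑ b, p a b * v b) * (B a).indicator 1 y from by
              rw [← heig y hy, hA y]]
        _ = (∑ b, p c b * v b) * β c := L2 c _
        _ = β c * ∑ b, p c b * v b := by ring
    by_cases hv : v = 0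
    · exfalso
      apply hne
      have hz : ∀ x ∈ Icc (0:ℝ) 1, g x = 0 := by
        intro x hx
        have h2 := heig x hx
        rw [hA x] at h2
        simp only [hv, Pi.zero_apply, mul_zero, zero_mul, Finset.sum_const_zero] at h2
        exact (mul_eq_zero.mp h2.symm).resolve_left hθ'
      rw [Filter.EventuallyEq, ae_restrict_iff' measurableSet_Icc]
      exact ae_of_all _ fun x hx => by simp [hz x hx]
    · obtain ⟨c₀, hc₀⟩ := Function.ne_iff.mp hv
      set w : Fin k → ℝ := fun c => v c / Real.sqrt (β c) with hw_def
      have hw0 : w c₀ ≠ 0 := div_ne_zero hc₀ (hsne c₀)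
      have heigw : ∀ c, (∑ b, ptld c b * w b) = θ' * w c := by
        intro c
        have h1 : ∀ b, ptld c b * w b = Real.sqrt (β c) * (p c b * v b) := by
          intro b
          rw [hw_def, hptld, Real.sqrt_mul (hβpos c).le]
          field_simp [hsne b]
        rw [Finset.sum_congr rfl fun b _ => h1 b, ← Finset.mul_sum]
        have h2 : (∑ b, p c b * v b) = θ' * v c / β c :=
          (eq_div_iff (hβne c)).mpr (by rw [mul_comm, ← hB c])
        rw [h2, hw_def]
        rw [show β c = Real.sqrt (β c) * Real.sqrt (β c) from (hsq c).symm]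
        field_simp [hsne c]
        rw [Real.sqrt_sq (Real.sqrt_nonneg _)]
      set u : Fin k → ℝ := fun a => ∑ c, U a c * w c with hu_def
      have hUw : ∀ c, (∑ a, U a c * u a) = w c := by
        intro c
        have h1 : (∑ a, U a c * u a) = ∑ b, (Uᵀ * U) c b * w b := by
          simp_rw [hu_def, Finset.mul_sum]
          rw [Finset.sum_comm]
          refine Finset.sum_congr rfl fun b _ => ?_
          rw [Matrix.mul_apply, Finset.sum_mul]
          refine Finset.sum_congr rfl fun a _ => ?_
          rw [Matrix.transpose_apply]
          ring
        rw [h1, hUorth]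
        simp [Matrix.one_apply, ite_mul]
      have hune : ∃ a, u a ≠ 0 := by
        by_contra h
        push_neg at h
        apply hw0
        rw [← hUw c₀]
        simp [h]
      obtain ⟨a₀, ha₀⟩ := hune
      have heigu : ∀ a, θ a * u a = θ' * u a := by
        intro a
        have h1 : θ' * u a = ∑ b, (U * ptld) a b * w b := by
          rw [hu_def, Finset.mul_sum]
          simp_rw [show ∀ c, θ' * (U a c * w c) = U a c * (θ' * w c) from fun c => by ring,
            ← heigw]
          simp_rw [Finset.mul_sum]
          rw [Finset.sum_comm]
          refine Finset.sum_congr rfl fun b _ => ?_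
          rw [Matrix.mul_apply, Finset.sum_mul]
          exact Finset.sum_congr rfl fun c _ => by ring
        rw [h1, hUp]
        simp_rw [Matrix.diagonal_mul]
        rw [hu_def, Finset.mul_sum]
        exact Finset.sum_congr rfl fun b _ => by ring
      exact ⟨a₀, (mul_right_cancel₀ ha₀ (heigu a₀)).symm⟩
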